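/- Let X ⊆ 2^ω and let D be a set of perfect trees that is dense in Sacks forcing, translation-invariant (p ∈ D iff p + t ∈ D for all t), and such that no subfamily of D of cardinality less than the continuum covers X with its bodies. Then there exists a Marczewski null set Y with X + Y = 2^ω; in particular X is not s₀-shiftable. -/

import Mathlib

open Cardinal

abbrev Cantor : Type := ℕ → Bool

def cAdd (x y : Cantor) : Cantor := fun n => xor (x n) (y n)

def setAdd (X Y : Set Cantor) : Set Cantor := Set.image2 cAdd X Y

def IsTree (p : Set (List Bool)) : Prop := ∀ σ ∈ p, ∀ τ : List Bool, τ <+: σ → τ ∈ p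

def Splits (p : Set (List Bool)) (σ : List Bool) : Prop :=
  σ ++ [false] ∈ p ∧ σ ++ [true] ∈ p

def PerfTree (p : Set (List Bool)) : Prop :=
  p.Nonempty ∧ IsTree p ∧ ∀ σ ∈ p, ∃ τ ∈ p, σ <+: τ ∧ Splits p τ

def seg (x : Cantor) (n : ℕ) : List Bool := List.ofFn (fun i : Fin n => x i)

def body (p : Set (List Bool)) : Set Cantor := { x | ∀ n, seg x n ∈ p }

def shiftNode (t : Cantor) (σ : List Bool) : List Bool :=
  σ.mapIdx fun i b => xor b (t i)

def treeAdd (p : Set (List Bool)) (t : Cantor) : Set (List Bool) := shiftNode t '' p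

def SkewT (p : Set (List Bool)) : Prop :=
  ∀ σ ∈ p, ∀ τ ∈ p, Splits p σ → Splits p τ → σ.length = τ.length → σ = τ

def PerfectSet (P : Set Cantor) : Prop := Perfect P ∧ P.Nonempty

def MarczewskiNull (Y : Set Cantor) : Prop :=
  ∀ P : Set Cantor, PerfectSet P → ∃ Q, PerfectSet Q ∧ Q ⊆ P ∧ Q ∩ Y = ∅

def MarczewskiNullT (Y : Set Cantor) : Prop :=
  ∀ p, PerfTree p → ∃ q, PerfTree q ∧ q ⊆ p ∧ body q ∩ Y = ∅

def Shiftable (X : Set Cantor) : Prop :=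
  ∀ Y, MarczewskiNull Y → setAdd X Y ≠ Set.univ

/- ### Basic lemmas about seg, prefixes -/

lemma seg_length (x : Cantor) (n : ℕ) : (seg x n).length = n := List.length_ofFn

lemma seg_getElem (x : Cantor) (n : ℕ) (i : ℕ) (h : i < (seg x n).length) :
    (seg x n)[i] = x i := by simp [seg]

lemma seg_prefix (x : Cantor) {m n : ℕ} (h : m ≤ n) : seg x m <+: seg x n := by
  refine List.prefix_iff_eq_take.mpr ?_
  apply List.ext_getElem (by simp [seg_length, h])
  intro i h1 h2
  simp [seg, List.getElem_take]

lemma prefix_seg {σ : List Bool} {x : Cantor} {n : ℕ} (h : σ <+: seg x n) :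
    σ = seg x σ.length := by
  apply List.ext_getElem (by simp [seg_length])
  intro i h1 h2
  rw [seg_getElem]
  have := h.getElem h1
  rw [seg_getElem] at this
  exact this

lemma seg_prefix_iff {σ : List Bool} {x : Cantor} {n : ℕ} :
    σ <+: seg x n ↔ σ = seg x σ.length ∧ σ.length ≤ n := by
  constructor
  · intro h
    exact ⟨prefix_seg h, by simpa [seg_length] using h.length_le⟩
  · rintro ⟨h1, h2⟩
    rw [h1]; exact seg_prefix x h2

lemma seg_eq_iff {σ : List Bool} {x : Cantor} :
    seg x σ.length = σ ↔ ∀ i (h : i < σ.length), σ[i] = x i := by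
  constructor
  · intro h i hi
    have := seg_getElem x σ.length i (by simpa [seg_length] using hi)
    simpa [h] using this
  · intro h
    apply List.ext_getElem (by simp [seg_length])
    intro i h1 h2
    rw [seg_getElem, h i h2]

lemma seg_ext {x y : Cantor} {n : ℕ} (h : ∀ i < n, x i = y i) : seg x n = seg y n := by
  apply List.ext_getElem (by simp [seg_length])
  intro i h1 h2
  simp only [seg, List.getElem_ofFn]
  exact h i (by simpa [seg_length] using h1)

lemma seg_eq_iff_agree {x y : Cantor} {n : ℕ} : seg x n = seg y n ↔ ∀ i < n, x i = y i := by
  constructor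
  · intro h i hi
    have h1 := List.getElem_of_eq h (i := i) (by simp [seg_length, hi])
    simpa [seg] using h1
  · exact seg_ext

/- ### cAdd and shiftNode -/

lemma cAdd_cancel (t x : Cantor) : cAdd t (cAdd t x) = x := by
  funext n; simp [cAdd]

lemma shiftNode_seg (t x : Cantor) (n : ℕ) : shiftNode t (seg x n) = seg (cAdd x t) n := by
  apply List.ext_getElem (by simp [shiftNode, seg])
  intro i h1 h2
  simp [shiftNode, seg, cAdd]

lemma shiftNode_shiftNode (t : Cantor) (σ : List Bool) : shiftNode t (shiftNode t σ) = σ := by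
  apply List.ext_getElem (by simp [shiftNode])
  intro i h1 h2
  simp [shiftNode]

lemma mem_body_treeAdd {q : Set (List Bool)} {t x : Cantor} :
    x ∈ body (treeAdd q t) ↔ cAdd x t ∈ body q := by
  constructor
  · intro h n
    obtain ⟨σ, hσ, hs⟩ := h n
    have : σ = shiftNode t (seg x n) := by rw [← hs, shiftNode_shiftNode]
    rw [this, shiftNode_seg] at hσ
    exact hσ
  · intro h n
    exact ⟨seg (cAdd x t) n, h n, by rw [shiftNode_seg]; congr 1; funext k; simp [cAdd]⟩

/- ### branches through perfect trees -/

lemma nil_mem_of_perf {q : Set (List Bool)} (hq : PerfTree q) : [] ∈ q := by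
  obtain ⟨⟨σ, hσ⟩, htree, -⟩ := hq
  exact htree σ hσ [] (List.nil_prefix)

lemma branch_through {q : Set (List Bool)} (hq : PerfTree q) {σ : List Bool} (hσ : σ ∈ q) :
    ∃ x ∈ body q, seg x σ.length = σ := by
  obtain ⟨-, htree, hsplit⟩ := hq
  choose f hf1 hf2 hf3 using hsplit
  set g : {τ // τ ∈ q} → {τ // τ ∈ q} :=
    fun τ => ⟨f τ.1 τ.2 ++ [false], (hf3 τ.1 τ.2).1⟩ with hg
  have hgmono : ∀ τ : {τ // τ ∈ q}, τ.1 <+: (g τ).1 ∧ τ.1.length < (g τ).1.length := by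
    intro τ
    have h1 : τ.1 <+: f τ.1 τ.2 ++ [false] := (hf2 τ.1 τ.2).trans (List.prefix_append _ _)
    refine ⟨h1, ?_⟩
    have := (hf2 τ.1 τ.2).length_le
    show τ.1.length < (f τ.1 τ.2 ++ [false]).length
    simp only [List.length_append, List.length_cons, List.length_nil]
    omega
  set h : ℕ → {τ // τ ∈ q} := fun n => g^[n] ⟨σ, hσ⟩ with hh
  have hmono : ∀ m n, m ≤ n → (h m).1 <+: (h n).1 := by
    intro m n hmn
    induction n with
    | zero => simp_all
    | succ k ih =>
      rcases Nat.lt_or_ge m (k+1) with h1 | h1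
      · have := ih (by omega)
        refine this.trans ?_
        rw [hh]
        simp only [Function.iterate_succ_apply']
        exact (hgmono _).1
      · have : m = k + 1 := by omega
        subst this; exact List.prefix_refl _
  have hlen : ∀ n, σ.length + n ≤ (h n).1.length := by
    intro n
    induction n with
    | zero => simp [hh]
    | succ k ih =>
      have := (hgmono (h k)).2
      have h2 : h (k+1) = g (h k) := by rw [hh]; simp [Function.iterate_succ_apply']
      rw [h2]; omega
  refine ⟨fun k => ((h (k+1)).1).getD k false, ?_, ?_⟩
  · intro n
    have hlen2 : n ≤ (h n).1.length := le_trans (by omega) (hlen n)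
    have : seg (fun k => ((h (k+1)).1).getD k false) n = (h n).1.take n := by
      apply List.ext_getElem (by simp [seg_length]; omega)
      intro i h1 h2
      rw [seg_getElem, List.getElem_take]
      have hik : i < (h (i+1)).1.length := by have := hlen (i+1); omega
      rw [List.getD_eq_getElem _ _ hik]
      have hpre : (h (i+1)).1 <+: (h n).1 ∨ (h n).1 <+: (h (i+1)).1 := by
        rcases Nat.le_total (i+1) n with hc | hc
        · exact Or.inl (hmono _ _ hc)
        · exact Or.inr (hmono _ _ hc)
      have hin : i < n := by simpa [seg_length] using h1
      rcases hpre with hp | hp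
      · exact hp.getElem hik
      · exact (hp.getElem (lt_of_lt_of_le hin hlen2)).symm
    rw [this]
    exact htree _ (h n).2 _ (List.take_prefix _ _)
  · apply List.ext_getElem (by simp [seg_length])
    intro i h1 h2
    rw [seg_getElem]
    have hik : i < (h (i+1)).1.length := by have := hlen (i+1); omega
    rw [List.getD_eq_getElem _ _ hik]
    have hp : σ <+: (h (i+1)).1 := hmono 0 (i+1) (by omega)
    exact (hp.getElem h2).symm

/- ### topology of Cantor space -/

lemma cylinder_mem_nhds (x : Cantor) (n : ℕ) : {z : Cantor | seg z n = seg x n} ∈ nhds x := by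
  rw [nhds_pi, Filter.mem_pi]
  refine ⟨Set.Iio n, Set.finite_Iio n, fun i => {x i}, fun i => ?_, ?_⟩
  · simp [nhds_discrete]
  · intro z hz
    simp only [Set.mem_pi, Set.mem_Iio, Set.mem_singleton_iff] at hz
    exact seg_ext fun i hi => hz i hi

lemma exists_cylinder_subset {x : Cantor} {U : Set Cantor} (hU : U ∈ nhds x) :
    ∃ n, {z : Cantor | seg z n = seg x n} ⊆ U := by
  rw [nhds_pi, Filter.mem_pi] at hU
  obtain ⟨I, hI, t, ht, hsub⟩ := hU
  obtain ⟨n, hn⟩ := hI.bddAbove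
  refine ⟨n + 1, fun z hz => ?_⟩
  apply hsub
  intro i hi
  have hin : i < n + 1 := by
    have := hn hi
    omega
  have hzx : z i = x i := seg_eq_iff_agree.mp hz i hin
  rw [hzx]
  have := ht i
  rwa [nhds_discrete, Filter.mem_pure] at this
/- ### body of a perfect tree is a perfect set -/

lemma body_isClosed (q : Set (List Bool)) : IsClosed (body q) := by
  rw [← isOpen_compl_iff]
  rw [isOpen_iff_mem_nhds]
  intro x hx
  simp only [Set.mem_compl_iff, body, Set.mem_setOf_eq, not_forall] at hx
  obtain ⟨n, hn⟩ := hx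
  filter_upwards [cylinder_mem_nhds x n] with z hz
  simp only [Set.mem_compl_iff, body, Set.mem_setOf_eq, not_forall]
  exact ⟨n, by rwa [hz]⟩

lemma body_perfectSet {q : Set (List Bool)} (hq : PerfTree q) : PerfectSet (body q) := by
  have htree := hq.2.1
  constructor
  · constructor
    · exact body_isClosed q
    · intro x hx
      rw [accPt_iff_nhds]
      intro U hU
      obtain ⟨n, hn⟩ := exists_cylinder_subset hU
      obtain ⟨τ, hτq, hτpre, hτsp⟩ := hq.2.2 (seg x n) (hx n)
      have hτlen : n ≤ τ.length := by simpa [seg_length] using hτpre.length_le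
      set b : Bool := if seg x (τ.length + 1) = τ ++ [false] then true else false with hb
      have hbq : τ ++ [b] ∈ q := by
        rcases Bool.dichotomy b with h | h <;> rw [h]
        · exact hτsp.1
        · exact hτsp.2
      obtain ⟨y, hy, hyseg⟩ := branch_through hq hbq
      have hylen : seg y (τ.length + 1) = τ ++ [b] := by
        simpa using hyseg
      have hxy : y ≠ x := by
        intro h
        subst h
        by_cases hc : seg y (τ.length + 1) = τ ++ [false]
        · have hb' : b = true := by rw [hb, if_pos hc]
          rw [hb'] at hylen
          rw [hylen] at hc
          simp at hc
        · have hb' : b = false := by rw [hb, if_neg hc]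
          rw [hb'] at hylen
          exact hc hylen
      refine ⟨y, ⟨hn ?_, hy⟩, hxy⟩
      -- seg y n = seg x n
      show seg y n = seg x n
      have h1 : seg y n <+: seg y (τ.length + 1) := seg_prefix y (by omega)
      rw [hylen] at h1
      have h2 : seg y n <+: τ := by
        apply List.prefix_of_prefix_length_le h1 (List.prefix_append _ _)
        simp [seg_length]; omega
      have h3 : seg y n <+: seg x n :=
        List.prefix_of_prefix_length_le h2 hτpre (by simp [seg_length])
      exact h3.eq_of_length (by simp [seg_length])
  · obtain ⟨y, hy, -⟩ := branch_through hq (nil_mem_of_perf hq)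
    exact ⟨y, hy⟩
/- ### the tree of a perfect set -/

lemma seg_succ (x : Cantor) (n : ℕ) : seg x (n + 1) = seg x n ++ [x n] := by
  apply List.ext_getElem (by simp [seg_length])
  intro i h1 h2
  rw [seg_getElem]
  rcases Nat.lt_or_ge i n with h | h
  · rw [List.getElem_append_left (by simp [seg_length, h]), seg_getElem]
  · have : i = n := by simp [seg_length] at h1; omega
    subst this
    rw [List.getElem_append_right (by simp [seg_length])]
    simp [seg_length]

def treeOf (P : Set Cantor) : Set (List Bool) := {σ | ∃ x ∈ P, seg x σ.length = σ}

lemma treeOf_perf {P : Set Cantor} (hP : PerfectSet P) : PerfTree (treeOf P) := by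
  obtain ⟨⟨hcl, hacc⟩, hne⟩ := hP
  refine ⟨?_, ?_, ?_⟩
  · obtain ⟨x, hx⟩ := hne
    exact ⟨[], x, hx, rfl⟩
  · rintro σ ⟨x, hx, hseg⟩ τ hτ
    refine ⟨x, hx, ?_⟩
    have : τ <+: seg x σ.length := by rw [hseg]; exact hτ
    exact (prefix_seg this).symm
  · rintro σ ⟨x, hx, hseg⟩
    have hacc' := accPt_iff_nhds.mp (hacc x hx) _ (cylinder_mem_nhds x σ.length)
    obtain ⟨y, ⟨hycyl, hyP⟩, hyx⟩ := hacc'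
    have hxy : ∃ m, y m ≠ x m := by
      by_contra hcon
      push_neg at hcon
      exact hyx (funext hcon)
    set m := Nat.find hxy with hm
    have hspec : y m ≠ x m := Nat.find_spec hxy
    have hmin : ∀ i < m, y i = x i := fun i hi => by
      have := Nat.find_min hxy hi
      simpa using this
    have hmσ : σ.length ≤ m := by
      by_contra hcon
      push_neg at hcon
      exact hspec (seg_eq_iff_agree.mp hycyl m hcon)
    refine ⟨seg x m, ⟨x, hx, by rw [seg_length]⟩, ?_, ?_, ?_⟩
    · rw [← hseg]; exact seg_prefix x hmσ
    · -- false side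
      rcases Bool.dichotomy (x m) with h | h
      · refine ⟨x, hx, ?_⟩
        have : seg x m ++ [false] = seg x (m + 1) := by rw [seg_succ, h]
        rw [this, seg_length]
      · refine ⟨y, hyP, ?_⟩
        have hym : y m = false := by
          rcases Bool.dichotomy (y m) with h2 | h2
          · exact h2
          · exact absurd (h2.trans h.symm) hspec
        have hseg' : seg y m = seg x m := seg_ext hmin
        have : seg x m ++ [false] = seg y (m + 1) := by rw [seg_succ, hym, hseg']
        rw [this, seg_length]
    · -- true side
      rcases Bool.dichotomy (x m) with h | h
      · refine ⟨y, hyP, ?_⟩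
        have hym : y m = true := by
          rcases Bool.dichotomy (y m) with h2 | h2
          · exact absurd (h2.trans h.symm) hspec
          · exact h2
        have hseg' : seg y m = seg x m := seg_ext hmin
        have : seg x m ++ [true] = seg y (m + 1) := by rw [seg_succ, hym, hseg']
        rw [this, seg_length]
      · refine ⟨x, hx, ?_⟩
        have : seg x m ++ [true] = seg x (m + 1) := by rw [seg_succ, h]
        rw [this, seg_length]

lemma body_treeOf {P : Set Cantor} (hcl : IsClosed P) : body (treeOf P) = P := by
  ext x
  constructor
  · intro hx
    rw [← hcl.closure_eq]
    rw [mem_closure_iff_nhds]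
    intro U hU
    obtain ⟨n, hn⟩ := exists_cylinder_subset hU
    obtain ⟨y, hy, hyseg⟩ := hx n
    rw [seg_length] at hyseg
    exact ⟨y, hn hyseg, hy⟩
  · intro hx n
    exact ⟨x, hx, by rw [seg_length]⟩

lemma body_mono {p q : Set (List Bool)} (h : p ⊆ q) : body p ⊆ body q :=
  fun _ hx n => h (hx n)

lemma marczewskiT_to_marczewski {Y : Set Cantor} (h : MarczewskiNullT Y) : MarczewskiNull Y := by
  intro P hP
  obtain ⟨q, hq, hsub, hdisj⟩ := h (treeOf P) (treeOf_perf hP)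
  refine ⟨body q, body_perfectSet hq, ?_, hdisj⟩
  calc body q ⊆ body (treeOf P) := body_mono hsub
  _ = P := body_treeOf hP.1.1
/- ### shrinking a perfect tree off a small set -/

lemma mem_of_splits {q : Set (List Bool)} {τ : List Bool} (h : Splits q τ) (b : Bool) :
    τ ++ [b] ∈ q := by
  cases b
  · exact h.1
  · exact h.2

noncomputable def splitExt {q : Set (List Bool)} (hq : PerfTree q) (σ : List Bool) (hσ : σ ∈ q) :
    {τ : List Bool // τ ∈ q ∧ σ <+: τ ∧ Splits q τ} :=
  ⟨Classical.choose (hq.2.2 σ hσ), by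
    obtain ⟨h1, h2, h3⟩ := Classical.choose_spec (hq.2.2 σ hσ)
    exact ⟨h1, h2, h3⟩⟩

noncomputable def sNode {q : Set (List Bool)} (hq : PerfTree q) :
    (ρ : List Bool) → {τ : List Bool // τ ∈ q ∧ Splits q τ}
  | [] =>
      let e := splitExt hq [] (nil_mem_of_perf hq)
      ⟨e.1, e.2.1, e.2.2.2⟩
  | b :: ρ =>
      let τ := sNode hq ρ
      let e := splitExt hq (τ.1 ++ [b]) (mem_of_splits τ.2.2 b)
      ⟨e.1, e.2.1, e.2.2.2⟩

lemma sNode_cons {q : Set (List Bool)} (hq : PerfTree q) (b : Bool) (ρ : List Bool) :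
    (sNode hq ρ).1 ++ [b] <+: (sNode hq (b :: ρ)).1 := by
  simp only [sNode]
  exact (splitExt hq _ _).2.2.1

lemma sNode_cons_lt {q : Set (List Bool)} (hq : PerfTree q) (b : Bool) (ρ : List Bool) :
    (sNode hq ρ).1.length < (sNode hq (b :: ρ)).1.length := by
  have := (sNode_cons hq b ρ).length_le
  simp only [List.length_append, List.length_cons, List.length_nil] at this
  omega

lemma sNode_suffix_mono {q : Set (List Bool)} (hq : PerfTree q) {ρ τ : List Bool}
    (h : τ <:+ ρ) : (sNode hq τ).1 <+: (sNode hq ρ).1 := by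
  induction ρ with
  | nil => rw [List.suffix_nil.mp h]
  | cons b ρ ih =>
    rcases List.suffix_cons_iff.mp h with h1 | h1
    · rw [h1]
    · exact (ih h1).trans ((List.prefix_append _ _).trans (sNode_cons hq b ρ))

lemma sNode_incomp_aux {q : Set (List Bool)} (hq : PerfTree q) :
    ∀ (n : ℕ) {ρ ρ' : List Bool}, ρ.length = n → ρ'.length = n → ρ ≠ ρ' →
    ¬ ((sNode hq ρ).1 <+: (sNode hq ρ').1) := by
  intro n
  induction n with
  | zero =>
    intro ρ ρ' h1 h2 hne
    rw [List.length_eq_zero_iff.mp h1, List.length_eq_zero_iff.mp h2] at hne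
    exact absurd rfl hne
  | succ k ih =>
    intro ρ ρ' h1 h2 hne
    match ρ, ρ' with
    | b :: τ, b' :: τ' =>
      simp only [List.length_cons, add_left_inj] at h1 h2
      intro hpre
      by_cases hτ : τ = τ'
      · subst hτ
        have hbb : b ≠ b' := fun h => hne (by rw [h])
        have hp1 : (sNode hq τ).1 ++ [b] <+: (sNode hq (b' :: τ)).1 :=
          (sNode_cons hq b τ).trans hpre
        have hp2 : (sNode hq τ).1 ++ [b'] <+: (sNode hq (b' :: τ)).1 :=
          sNode_cons hq b' τ
        have h3 : (sNode hq τ).1 ++ [b] = (sNode hq τ).1 ++ [b'] :=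
          (List.prefix_of_prefix_length_le hp1 hp2 (by simp)).eq_of_length (by simp)
        have : b = b' := by simpa using h3
        exact hbb this
      · have hp1 : (sNode hq τ).1 <+: (sNode hq (b' :: τ')).1 :=
          ((List.prefix_append _ _).trans (sNode_cons hq b τ)).trans hpre
        have hp2 : (sNode hq τ').1 <+: (sNode hq (b' :: τ')).1 :=
          (List.prefix_append _ _).trans (sNode_cons hq b' τ')
        rcases List.prefix_or_prefix_of_prefix hp1 hp2 with h3 | h3
        · exact ih h1 h2 hτ h3
        · exact ih h2 h1 (Ne.symm hτ) h3

lemma sNode_incomp {q : Set (List Bool)} (hq : PerfTree q) {ρ ρ' : List Bool}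
    (hlen : ρ.length = ρ'.length) (hne : ρ ≠ ρ') :
    ¬ ((sNode hq ρ).1 <+: (sNode hq ρ').1) :=
  sNode_incomp_aux hq ρ'.length hlen rfl hne
/- ### the family of disjoint subtrees -/

def okay (u : Cantor) : List Bool → Prop
  | [] => True
  | b :: ρ => okay u ρ ∧ (ρ.length % 2 = 0 → b = u (ρ.length / 2))

lemma okay_nil (u : Cantor) : okay u [] := trivial

lemma okay_suffix {u : Cantor} : ∀ {ρ τ : List Bool}, okay u ρ → τ <:+ ρ → okay u τ := by
  intro ρ
  induction ρ with
  | nil =>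
    intro τ h hs
    rw [List.suffix_nil.mp hs]; exact trivial
  | cons b ρ ih =>
    intro τ h hs
    rcases List.suffix_cons_iff.mp hs with h1 | h1
    · rw [h1]; exact h
    · exact ih h.1 h1

lemma okay_even_eq {u u' : Cantor} : ∀ {ρ : List Bool} {k : ℕ}, okay u ρ → okay u' ρ →
    2 * k < ρ.length → u k = u' k := by
  intro ρ
  induction ρ with
  | nil => intro k _ _ h; simp at h
  | cons b τ ih =>
    intro k h1 h2 hk
    simp only [List.length_cons] at hk
    rcases Nat.lt_or_ge (2 * k) τ.length with h | h
    · exact ih h1.1 h2.1 h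
    · have hlen : τ.length = 2 * k := by omega
      have e1 := h1.2 (by omega)
      have e2 := h2.2 (by omega)
      rw [hlen] at e1 e2
      rw [Nat.mul_div_cancel_left k (by norm_num)] at e1 e2
      rw [← e1, ← e2]

def shrTree {q : Set (List Bool)} (hq : PerfTree q) (u : Cantor) : Set (List Bool) :=
  {σ | ∃ ρ, okay u ρ ∧ σ <+: (sNode hq ρ).1}

lemma shrTree_subset {q : Set (List Bool)} (hq : PerfTree q) (u : Cantor) :
    shrTree hq u ⊆ q := by
  rintro σ ⟨ρ, -, hpre⟩
  exact hq.2.1 _ (sNode hq ρ).2.1 _ hpre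

-- extend any okay ρ to an okay one of odd length that is a suffix-extension
lemma okay_extend {u : Cantor} (ρ : List Bool) (h : okay u ρ) :
    ∃ ρ', okay u ρ' ∧ ρ <:+ ρ' ∧ ρ'.length % 2 = 1 ∧
      ∀ c : Bool, okay u (c :: ρ') := by
  have key : ∀ τ : List Bool, okay u τ → τ.length % 2 = 1 → ∀ c : Bool, okay u (c :: τ) := by
    intro τ hτ hodd c
    exact ⟨hτ, fun he => by omega⟩
  rcases Nat.lt_or_ge (ρ.length % 2) 1 with hpar | hpar
  · -- even length
    refine ⟨u (ρ.length / 2) :: ρ, ⟨h, fun _ => rfl⟩, List.suffix_cons _ _, by simp; omega, ?_⟩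
    exact key _ ⟨h, fun _ => rfl⟩ (by simp; omega)
  · -- odd length; first add a free bit
    have hodd : ρ.length % 2 = 1 := by omega
    have h1 : okay u (false :: ρ) := ⟨h, fun he => by omega⟩
    have hlen1 : (false :: ρ).length % 2 = 0 := by simp; omega
    refine ⟨u ((false :: ρ).length / 2) :: (false :: ρ), ⟨h1, fun _ => rfl⟩,
      ((List.suffix_cons _ _).trans (List.suffix_cons _ _)), by simp; omega, ?_⟩
    exact key _ ⟨h1, fun _ => rfl⟩ (by simp; omega)

lemma shrTree_perf {q : Set (List Bool)} (hq : PerfTree q) (u : Cantor) :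
    PerfTree (shrTree hq u) := by
  refine ⟨⟨[], [], okay_nil u, List.nil_prefix⟩, ?_, ?_⟩
  · rintro σ ⟨ρ, hρ, hpre⟩ τ hτ
    exact ⟨ρ, hρ, hτ.trans hpre⟩
  · rintro σ ⟨ρ, hρ, hpre⟩
    obtain ⟨ρ', hρ', hsuf, hodd, hcons⟩ := okay_extend ρ hρ
    refine ⟨(sNode hq ρ').1, ⟨ρ', hρ', List.prefix_refl _⟩,
      hpre.trans (sNode_suffix_mono hq hsuf), ?_, ?_⟩
    · exact ⟨false :: ρ', hcons false, sNode_cons hq false ρ'⟩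
    · exact ⟨true :: ρ', hcons true, sNode_cons hq true ρ'⟩

lemma sNode_length_bdd {q : Set (List Bool)} (hq : PerfTree q) (n : ℕ) :
    ∃ M, ∀ ρ : List Bool, ρ.length ≤ n → (sNode hq ρ).1.length ≤ M := by
  have hfin : {ρ : List Bool | ρ.length ≤ n}.Finite := List.finite_length_le Bool n
  have himg : ((fun ρ => (sNode hq ρ).1.length) '' {ρ : List Bool | ρ.length ≤ n}).Finite :=
    hfin.image _
  obtain ⟨M, hM⟩ := himg.bddAbove
  exact ⟨M, fun ρ hρ => hM ⟨ρ, hρ, rfl⟩⟩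

lemma body_shrTree_node {q : Set (List Bool)} (hq : PerfTree q) (u : Cantor) {x : Cantor}
    (hx : x ∈ body (shrTree hq u)) (n : ℕ) :
    ∃ ρ : List Bool, ρ.length = n ∧ okay u ρ ∧ (sNode hq ρ).1 = seg x (sNode hq ρ).1.length := by
  obtain ⟨M, hM⟩ := sNode_length_bdd hq n
  obtain ⟨ρ', hρ', hpre⟩ := hx (M + 1)
  have hlen' : n ≤ ρ'.length := by
    by_contra hcon
    push_neg at hcon
    have h1 := hM ρ' (by omega)
    have h2 : (M + 1 : ℕ) ≤ (sNode hq ρ').1.length := by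
      simpa [seg_length] using hpre.length_le
    omega
  set ρ := ρ'.drop (ρ'.length - n) with hρdef
  have hsuf : ρ <:+ ρ' := List.drop_suffix _ _
  have hlen : ρ.length = n := by simp [hρdef]; omega
  have hok : okay u ρ := okay_suffix hρ' hsuf
  refine ⟨ρ, hlen, hok, ?_⟩
  have h1 : (sNode hq ρ).1 <+: (sNode hq ρ').1 := sNode_suffix_mono hq hsuf
  have h2 : (sNode hq ρ).1 <+: seg x (M + 1) :=
    List.prefix_of_prefix_length_le h1 hpre (by simp only [seg_length]; have := hM ρ (by omega); omega)
  have := prefix_seg h2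
  exact this

lemma body_shrTree_disjoint {q : Set (List Bool)} (hq : PerfTree q) {u u' : Cantor}
    (hne : u ≠ u') : body (shrTree hq u) ∩ body (shrTree hq u') = ∅ := by
  rw [Set.eq_empty_iff_forall_notMem]
  rintro x ⟨hx, hx'⟩
  have : ∃ k, u k ≠ u' k := by
    by_contra hcon
    push_neg at hcon
    exact hne (funext hcon)
  obtain ⟨k, hk⟩ := this
  obtain ⟨ρ, hρlen, hρok, hρseg⟩ := body_shrTree_node hq u hx (2 * k + 1)
  obtain ⟨ρ', hρ'len, hρ'ok, hρ'seg⟩ := body_shrTree_node hq u' hx' (2 * k + 1)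
  have hρρ' : ρ = ρ' := by
    by_contra hcon
    rcases Nat.le_total (sNode hq ρ).1.length (sNode hq ρ').1.length with hc | hc
    · have : (sNode hq ρ).1 <+: (sNode hq ρ').1 := by
        rw [hρseg, hρ'seg]
        exact seg_prefix x hc
      exact sNode_incomp hq (hρlen.trans hρ'len.symm) hcon this
    · have : (sNode hq ρ').1 <+: (sNode hq ρ).1 := by
        rw [hρseg, hρ'seg]
        exact seg_prefix x hc
      exact sNode_incomp hq (hρ'len.trans hρlen.symm) (Ne.symm hcon) this
  subst hρρ'
  exact hk (okay_even_eq hρok hρ'ok (by omega))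

lemma shrink_lemma {q : Set (List Bool)} (hq : PerfTree q) {S : Set Cantor}
    (hS : #S < Cardinal.continuum) :
    ∃ r, PerfTree r ∧ r ⊆ q ∧ body r ∩ S = ∅ := by
  by_contra hcon
  push_neg at hcon
  have hch : ∀ u : Cantor, ∃ y, y ∈ body (shrTree hq u) ∩ S := by
    intro u
    exact hcon (shrTree hq u) (shrTree_perf hq u) (shrTree_subset hq u)
  choose y hy using hch
  have hinj : Function.Injective (fun u => (⟨y u, (hy u).2⟩ : S)) := by
    intro u u' h
    by_contra hne
    have h1 : y u = y u' := congrArg Subtype.val h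
    have h2 := body_shrTree_disjoint hq hne
    rw [Set.eq_empty_iff_forall_notMem] at h2
    exact h2 (y u) ⟨(hy u).1, h1 ▸ (hy u').1⟩
  have hle : #Cantor ≤ #S := Cardinal.mk_le_of_injective hinj
  have hcc : #Cantor = Cardinal.continuum := by
    rw [Cardinal.mk_arrow]
    simp [Cardinal.mk_bool]
  rw [hcc] at hle
  exact absurd hS (not_lt.mpr hle)
/- ### cardinal bookkeeping -/

lemma mk_cantor : #Cantor = Cardinal.continuum := by
  rw [Cardinal.mk_arrow]
  simp [Cardinal.mk_bool]

lemma mk_setList : #(Set (List Bool)) = Cardinal.continuum := by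
  rw [Cardinal.mk_set]
  simp [Cardinal.mk_list_eq_aleph0]

def OO : Type := Ordinal.ToType Cardinal.continuum.{0}.ord

noncomputable instance : LinearOrder OO := by unfold OO; infer_instance

instance : WellFoundedLT OO := by unfold OO; infer_instance

instance : IsWellOrder OO (· < ·) := isWellOrder_lt

lemma mk_OO : #OO = Cardinal.continuum := by
  have : #(Ordinal.ToType Cardinal.continuum.{0}.ord) = Cardinal.continuum.{0}.ord.card :=
    Cardinal.mk_toType _
  rw [Cardinal.card_ord] at this
  exact this

lemma card_Iio_lt (a : OO) : #{b | b < a} < Cardinal.continuum := by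
  have h := Ordinal.card_typein (r := ((· < ·) : OO → OO → Prop)) a
  have h2 := Ordinal.typein_lt_self (o := Cardinal.continuum.ord) a
  have h3 := Cardinal.lt_ord.mp h2
  exact h.trans_lt h3

lemma card_Iic_lt (a : OO) : #{b | b ≤ a} < Cardinal.continuum := by
  have heq : {b | b ≤ a} = insert a {b | b < a} := by
    ext b; simp [le_iff_lt_or_eq, or_comm]
  rw [heq]
  calc #(insert a {b | b < a} : Set OO) ≤ #{b | b < a} + 1 := Cardinal.mk_insert_le
  _ < Cardinal.continuum := Cardinal.add_lt_of_lt Cardinal.aleph0_le_continuum (card_Iio_lt a)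
      (lt_of_lt_of_le Cardinal.one_lt_aleph0 Cardinal.aleph0_le_continuum)

lemma univ_perftree : PerfTree (Set.univ : Set (List Bool)) :=
  ⟨⟨[], trivial⟩, fun _ _ _ _ => trivial,
    fun σ _ => ⟨σ, trivial, List.prefix_refl _, trivial, trivial⟩⟩

theorem stmt7 (X : Set Cantor) (D : Set (Set (List Bool)))
    (hperf : ∀ p ∈ D, PerfTree p)
    (hdense : ∀ p, PerfTree p → ∃ q ∈ D, q ⊆ p)
    (hinv : ∀ p, PerfTree p → ∀ t : Cantor, p ∈ D ↔ treeAdd p t ∈ D)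
    (hcov : ∀ D' ⊆ D, #D' < Cardinal.continuum → ¬ X ⊆ ⋃ p ∈ D', body p) :
    (∃ Y, MarczewskiNull Y ∧ setAdd X Y = Set.univ) ∧ ¬ Shiftable X := by
  -- enumerations
  have ez : Nonempty (OO ≃ Cantor) := Cardinal.eq.mp (mk_OO.trans mk_cantor.symm)
  have ep : Nonempty (OO ≃ Set (List Bool)) := Cardinal.eq.mp (mk_OO.trans mk_setList.symm)
  obtain ⟨z⟩ := ez
  obtain ⟨pt⟩ := ep
  -- choose dense members below each perfect tree
  have hq : ∀ α : OO, ∃ q0, q0 ∈ D ∧ (PerfTree (pt α) → q0 ⊆ pt α) := by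
    intro α
    by_cases h : PerfTree (pt α)
    · obtain ⟨q0, h1, h2⟩ := hdense _ h
      exact ⟨q0, h1, fun _ => h2⟩
    · obtain ⟨q0, h1, _⟩ := hdense Set.univ univ_perftree
      exact ⟨q0, h1, fun h' => absurd h' h⟩
  choose qt hqtD hqtsub using hq
  -- choose points of X avoiding bodies of translated trees
  have hx : ∀ α : OO, ∃ x0, x0 ∈ X ∧ ∀ γ : OO, γ ≤ α → x0 ∉ body (treeAdd (qt γ) (z α)) := by
    intro α
    set D' : Set (Set (List Bool)) := (fun γ => treeAdd (qt γ) (z α)) '' {γ | γ ≤ α} with hD'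
    have hsub : D' ⊆ D := by
      rintro _ ⟨γ, -, rfl⟩
      exact (hinv (qt γ) (hperf _ (hqtD γ)) (z α)).mp (hqtD γ)
    have hcard : #D' < Cardinal.continuum :=
      lt_of_le_of_lt Cardinal.mk_image_le (card_Iic_lt α)
    have hn := hcov D' hsub hcard
    rw [Set.not_subset] at hn
    obtain ⟨x0, hx0X, hx0⟩ := hn
    refine ⟨x0, hx0X, fun γ hγ hbody => hx0 ?_⟩
    rw [Set.mem_iUnion₂]
    exact ⟨treeAdd (qt γ) (z α), ⟨γ, hγ, rfl⟩, hbody⟩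
  choose xf hxX hxavoid using hx
  set yf : OO → Cantor := fun α => cAdd (xf α) (z α) with hyf
  set Y : Set Cantor := Set.range yf with hY
  -- X + Y covers everything
  have hcover : setAdd X Y = Set.univ := by
    rw [Set.eq_univ_iff_forall]
    intro c
    set α := z.symm c with hα
    have hzα : z α = c := z.apply_symm_apply c
    refine Set.mem_image2.mpr ⟨xf α, hxX α, yf α, ⟨α, rfl⟩, ?_⟩
    rw [hyf]
    simp only
    rw [cAdd_cancel, hzα]
  -- Y is Marczewski null (tree version)
  have hnullT : MarczewskiNullT Y := by
    intro p hp
    set α := pt.symm p with hα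
    have hptα : pt α = p := pt.apply_symm_apply p
    have hqα : PerfTree (qt α) := hperf _ (hqtD α)
    set S : Set Cantor := yf '' {β | β < α} with hS
    have hScard : #S < Cardinal.continuum :=
      lt_of_le_of_lt Cardinal.mk_image_le (card_Iio_lt α)
    obtain ⟨r, hrperf, hrsub, hrdisj⟩ := shrink_lemma hqα hScard
    refine ⟨r, hrperf, ?_, ?_⟩
    · exact hrsub.trans (hptα ▸ hqtsub α (hptα.symm ▸ hp))
    · rw [Set.eq_empty_iff_forall_notMem]
      rintro w ⟨hwr, hwY⟩
      obtain ⟨β, rfl⟩ := hwY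
      rcases le_or_gt α β with hc | hc
      · -- later stages avoid body (qt α)
        have h1 : yf β ∈ body (qt α) := body_mono hrsub hwr
        have h2 : xf β ∈ body (treeAdd (qt α) (z β)) := by
          rw [mem_body_treeAdd]
          exact h1
        exact hxavoid β α hc h2
      · -- earlier stages avoided by the shrink
        have : yf β ∈ S := ⟨β, hc, rfl⟩
        rw [Set.eq_empty_iff_forall_notMem] at hrdisj
        exact hrdisj (yf β) ⟨hwr, this⟩
  have hnull : MarczewskiNull Y := marczewskiT_to_marczewski hnullT
  refine ⟨⟨Y, hnull, hcover⟩, fun hsh => hsh Y hnull hcover⟩
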